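/- Let b be a nonzero element of Q(Λ_{ℤ,univ}), viewed inside Λ_{ℚ,univ} = HahnSeries ℝ ℚ. Then for all sufficiently large primes p: every coefficient of b is p-integral (its denominator is prime to p), so the coefficientwise mod-p reduction [b]_p ∈ Λ_{𝔽_p,univ} = HahnSeries ℝ (ZMod p) is defined, and ν(b) ≤ ν([b]_p); equivalently, |b| ≥ |[b]_p| for the nonarchimedean norms |x| = e^{−ν(x)} (with |0| = 0). -/

import Mathlib

/-!
STATEMENT 4: Let `b` be a nonzero element of `Q(Λ_{ℤ,univ})`, viewed inside
`Λ_{ℚ,univ} = HahnSeries ℝ ℚ`. Then for all sufficiently large primes `p`: every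
coefficient of `b` is `p`-integral (its denominator is prime to `p`), so the
coefficientwise mod-`p` reduction `[b]_p ∈ Λ_{𝔽_p,univ}` is defined, and
`ν(b) ≤ ν([b]_p)` for the order valuations.
-/

noncomputable section

/-- The canonical coefficientwise embedding `Λ_{ℤ,univ} → Λ_{ℚ,univ}`. -/
def iota (x : HahnSeries ℝ ℤ) : HahnSeries ℝ ℚ := x.map (Int.castRingHom ℚ)

/-- Reduction of a (`p`-integral) rational number modulo `p`, sending `q` to
`q.num * (q.den)⁻¹` in `ZMod p`. -/
def ratRed (p : ℕ) : ZeroHom ℚ (ZMod p) where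
  toFun q := (q.num : ZMod p) * (q.den : ZMod p)⁻¹
  map_zero' := by simp

/-- Coefficientwise mod-`p` reduction `Λ_{ℚ,univ} → Λ_{𝔽_p,univ}` (meaningful on series
all of whose coefficients are `p`-integral). -/
def redQ (p : ℕ) (x : HahnSeries ℝ ℚ) : HahnSeries ℝ (ZMod p) := x.map (ratRed p)

/-- Rationals whose denominator divides a power of `c`. -/
def goodRats (c : ℤ) : Subring ℚ where
  carrier := {q | ∃ k : ℕ, (q.den : ℤ) ∣ c ^ k}
  zero_mem' := ⟨0, by simp⟩
  one_mem' := ⟨0, by simp⟩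
  add_mem' := by
    rintro a b ⟨k, hk⟩ ⟨l, hl⟩
    exact ⟨k + l, dvd_trans (Int.natCast_dvd_natCast.2 (Rat.add_den_dvd a b))
      (by push_cast; rw [pow_add]; exact mul_dvd_mul hk hl)⟩
  mul_mem' := by
    rintro a b ⟨k, hk⟩ ⟨l, hl⟩
    exact ⟨k + l, dvd_trans (Int.natCast_dvd_natCast.2 (Rat.mul_den_dvd a b))
      (by push_cast; rw [pow_add]; exact mul_dvd_mul hk hl)⟩
  neg_mem' := by rintro a ⟨k, hk⟩; exact ⟨k, by simpa using hk⟩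

lemma map_injective' {R S F : Type*} [Zero R] [Zero S] [FunLike F R S] [ZeroHomClass F R S]
    (f : F) (hf : Function.Injective f) : Function.Injective (fun x : HahnSeries ℝ R => x.map f) := by
  intro x y h
  ext a
  have := congrArg (fun z : HahnSeries ℝ S => z.coeff a) h
  simpa [HahnSeries.map_coeff] using hf this

lemma support_map {R S F : Type*} [Zero R] [Zero S] [FunLike F R S] [ZeroHomClass F R S]
    (f : F) (hf : Function.Injective f) (x : HahnSeries ℝ R) : (x.map f).support = x.support := by
  ext a
  simp only [HahnSeries.mem_support, HahnSeries.map_coeff]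
  constructor
  · intro h h'; exact h (by rw [h', map_zero])
  · intro h h'; exact h (hf (by rw [h', map_zero]))

lemma map_eq_zero_iff' {R S F : Type*} [Zero R] [Zero S] [FunLike F R S] [ZeroHomClass F R S]
    (f : F) (hf : Function.Injective f) (x : HahnSeries ℝ R) : x.map f = 0 ↔ x = 0 := by
  constructor
  · intro h
    ext a
    have := congrArg (fun z : HahnSeries ℝ S => z.coeff a) h
    simp only [HahnSeries.map_coeff, HahnSeries.coeff_zero] at this
    exact hf (this.trans (map_zero f).symm)
  · rintro rfl
    ext a
    simp [HahnSeries.map_coeff]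

lemma min_congr' {s t : Set ℝ} (h : s = t) (hs : s.IsWF) (hns : s.Nonempty)
    (ht : t.IsWF) (hnt : t.Nonempty) : hs.min hns = ht.min hnt := by subst h; rfl

lemma order_map {R S F : Type*} [Zero R] [Zero S] [FunLike F R S] [ZeroHomClass F R S]
    (f : F) (hf : Function.Injective f) (x : HahnSeries ℝ R) : (x.map f).order = x.order := by
  by_cases hx : x = 0
  · subst hx
    rw [(map_eq_zero_iff' f hf 0).2 rfl]
    simp [HahnSeries.order_zero]
  · rw [HahnSeries.order_of_ne hx,
      HahnSeries.order_of_ne (fun h => hx ((map_eq_zero_iff' f hf x).1 h))]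
    exact min_congr' (support_map f hf x) _ _ _ _

lemma leadingCoeff_map {R S F : Type*} [Zero R] [Zero S] [FunLike F R S] [ZeroHomClass F R S]
    (f : F) (hf : Function.Injective f) (x : HahnSeries ℝ R) :
    (x.map f).leadingCoeff = f x.leadingCoeff := by
  rw [HahnSeries.leadingCoeff_eq, HahnSeries.leadingCoeff_eq, order_map f hf,
    HahnSeries.map_coeff]

theorem valuation_does_not_decrease_under_reduction
    (b : HahnSeries ℝ ℚ) (hb : b ≠ 0)
    (hfrac : ∃ A B : HahnSeries ℝ ℤ, B ≠ 0 ∧ b * iota B = iota A) :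
    ∃ N : ℕ, ∀ p : ℕ, p.Prime → N < p →
      (∀ r : ℝ, ¬ (p : ℕ) ∣ (b.coeff r).den) ∧
      b.orderTop ≤ (redQ p b).orderTop := by
  obtain ⟨A, B, hB, hAB⟩ := hfrac
  set c : ℤ := B.leadingCoeff with hc
  have hc0 : c ≠ 0 := HahnSeries.leadingCoeff_ne_zero.2 hB
  set S : Subring ℚ := goodRats c with hS
  -- c is a unit in S
  have hcS : ((c : ℚ) : ℚ) ∈ S := ⟨0, by simp⟩
  have hcinvS : ((c : ℚ)⁻¹ : ℚ) ∈ S := ⟨1, by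
    rw [pow_one, Rat.inv_intCast_den, if_neg hc0]
    exact (Int.natAbs_dvd).2 dvd_rfl⟩
  have hcu : IsUnit (⟨(c : ℚ), hcS⟩ : S) := by
    refine IsUnit.of_mul_eq_one ⟨(c : ℚ)⁻¹, hcinvS⟩ ?_
    ext
    push_cast
    exact mul_inv_cancel₀ (by exact_mod_cast hc0)
  set f : ℤ →+* S := Int.castRingHom S with hf
  set σ : S →ₙ+* ℚ := (S.subtype : S →+* ℚ).toNonUnitalRingHom with hσ
  have hσinj : Function.Injective σ := Subtype.val_injective
  haveI : CharZero S := ⟨fun m n h => Nat.cast_injective (R := ℚ)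
    (congrArg Subtype.val h)⟩
  have hfinj : Function.Injective f := fun m n h => Int.cast_injective h
  set A' : HahnSeries ℝ S := A.map f with hA'
  set B' : HahnSeries ℝ S := B.map f with hB'
  have hB'0 : B' ≠ 0 := fun h => hB ((map_eq_zero_iff' f hfinj B).1 h)
  have hBl : B'.leadingCoeff = f c := leadingCoeff_map f hfinj B
  have hBu : IsUnit B' := HahnSeries.isUnit_iff.2 (by
    have hfc : f c = (⟨(c : ℚ), hcS⟩ : S) := Subtype.ext (by push_cast [hf]; rfl)
    rw [hBl, hfc]
    exact hcu)
  obtain ⟨u, hu⟩ := hBu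
  set b' : HahnSeries ℝ S := A' * (↑u⁻¹ : HahnSeries ℝ S) with hb'
  have hbB' : b' * B' = A' := by
    rw [hb', mul_assoc, ← hu]
    simp
  have hmapcomm : ∀ x : HahnSeries ℝ ℤ, (x.map f).map σ = iota x := by
    intro x
    ext a
    simp only [HahnSeries.map_coeff, iota]
    push_cast
    rfl
  have hιB : iota B ≠ 0 := fun h =>
    hB ((map_eq_zero_iff' (Int.castRingHom ℚ) (fun m n h => Int.cast_injective h) B).1 h)
  have hbeq : b = b'.map σ := by
    have h2 : (b'.map σ) * iota B = iota A := by
      rw [← hmapcomm B, ← hmapcomm A, ← HahnSeries.map_mul σ, hbB']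
    exact mul_right_cancel₀ hιB (hAB.trans h2.symm)
  have hmem : ∀ r : ℝ, b.coeff r ∈ S := fun r => by
    rw [hbeq, HahnSeries.map_coeff]
    exact (b'.coeff r).2
  refine ⟨c.natAbs, fun p hp hpc => ⟨fun r hdvd => ?_, ?_⟩⟩
  · obtain ⟨k, hk⟩ := hmem r
    have h1 : (p : ℤ) ∣ c ^ k :=
      dvd_trans (Int.natCast_dvd_natCast.2 hdvd) hk
    have h2 : (p : ℤ) ∣ c := (Nat.prime_iff_prime_int.1 hp).dvd_of_dvd_pow h1
    have h3 : p ∣ c.natAbs := by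
      simpa using Int.natAbs_dvd_natAbs.2 h2
    exact absurd (Nat.le_of_dvd (Int.natAbs_pos.2 hc0) h3) (not_le.2 hpc)
  · by_cases h0 : redQ p b = 0
    · rw [h0, HahnSeries.orderTop_zero]
      exact le_top
    · rw [← HahnSeries.order_eq_orderTop_of_ne_zero h0]
      refine HahnSeries.orderTop_le_of_coeff_ne_zero fun h => ?_
      apply HahnSeries.leadingCoeff_ne_zero.2 h0
      rw [HahnSeries.leadingCoeff_eq]
      show (b.map (ratRed p)).coeff _ = 0
      rw [HahnSeries.map_coeff, h, map_zero]

end
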